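/- Let $q_\sigma$ satisfy the pooling PMF axioms P.3 (Kronecker delta at $\sigma = 0$), P.4 (continuity at $\sigma = 0$), and P.5 (tail monotonicity: there exist $\epsilon > 0$, $K$ with $q_\sigma(k)$ nondecreasing in $\sigma$ on $[0,\epsilon]$ for $|k| \ge K$). Let $(c_k)_{k \in \mathbb{Z}}$ be a nonnegative sequence with $\sum_k q_\sigma(k) c_k < \infty$ for all $\sigma > 0$. Then $\lim_{\sigma \to 0^+} \sum_{k=-\infty}^\infty q_\sigma(k) c_k = c_0$. -/
import Mathlib


open Filter

/-- As `σ → 0⁺`, the pooled sum of a nonnegative sequence tends to its value at `0`. -/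
theorem pooled_sum_tendsto_center
    (q : ℝ → ℤ → ℝ)
    (hq_nonneg : ∀ σ ≥ (0:ℝ), ∀ k : ℤ, 0 ≤ q σ k)
    (hq_pmf : ∀ σ ≥ (0:ℝ), HasSum (q σ) 1)
    (hP3 : ∀ k : ℤ, q 0 k = if k = 0 then 1 else 0)
    (hP4 : ∀ k : ℤ, Tendsto (fun σ => q σ k) (nhdsWithin 0 (Set.Ici 0)) (nhds (q 0 k)))
    (hP5 : ∃ ε > (0:ℝ), ∃ K : ℕ, ∀ k : ℤ, (K : ℤ) ≤ |k| →
      MonotoneOn (fun σ => q σ k) (Set.Icc 0 ε))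
    (c : ℤ → ℝ)
    (hc_nonneg : ∀ k : ℤ, 0 ≤ c k)
    (hsum : ∀ σ > (0:ℝ), Summable (fun k : ℤ => q σ k * c k)) :
    Tendsto (fun σ : ℝ => ∑' k : ℤ, q σ k * c k) (nhdsWithin 0 (Set.Ioi 0)) (nhds (c 0)) := by
  obtain ⟨ε, hε, K, hK⟩ := hP5
  set S : Set ℤ := {k : ℤ | |k| < (K : ℤ)} with hS
  set bound : ℤ → ℝ := fun k => q ε k * c k + S.indicator c k with hbdef
  have hindnn : ∀ k, 0 ≤ S.indicator c k := fun k =>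
    Set.indicator_nonneg (fun j _ => hc_nonneg j) k
  have h_sum : Summable bound := by
    apply ((hsum ε hε).add _)
    apply summable_of_ne_finset_zero (s := Finset.Ioo (-(K:ℤ)) (K:ℤ))
    intro b hb
    apply Set.indicator_of_notMem
    simp only [Finset.mem_Ioo, not_and_or, not_lt] at hb
    simp only [hS, Set.mem_setOf_eq, not_lt]
    rcases hb with h | h
    · exact le_abs.mpr (Or.inr (by linarith))
    · exact le_abs.mpr (Or.inl h)
  have hab : ∀ k : ℤ, Tendsto (fun σ => q σ k * c k) (nhdsWithin 0 (Set.Ioi 0))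
      (nhds (q 0 k * c k)) := fun k =>
    Tendsto.mul_const _ ((hP4 k).mono_left (nhdsWithin_mono _ Set.Ioi_subset_Ici_self))
  have h_bound : ∀ᶠ σ in nhdsWithin (0:ℝ) (Set.Ioi 0), ∀ k : ℤ,
      ‖q σ k * c k‖ ≤ bound k := by
    filter_upwards [Ioc_mem_nhdsGT_of_mem (Set.left_mem_Ico.mpr hε)] with σ hσ k
    have hσ0 : (0:ℝ) ≤ σ := hσ.1.le
    have hnn : 0 ≤ q σ k * c k := mul_nonneg (hq_nonneg σ hσ0 k) (hc_nonneg k)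
    rw [Real.norm_of_nonneg hnn]
    by_cases hk : (K : ℤ) ≤ |k|
    · have hmono := hK k hk ⟨hσ0, hσ.2⟩ ⟨le_of_lt hε, le_refl ε⟩ hσ.2
      have : q σ k * c k ≤ q ε k * c k :=
        mul_le_mul_of_nonneg_right hmono (hc_nonneg k)
      show q σ k * c k ≤ q ε k * c k + S.indicator c k
      linarith [hindnn k]
    · push_neg at hk
      have h1 : q σ k ≤ 1 := le_hasSum (hq_pmf σ hσ0) k (fun j _ => hq_nonneg σ hσ0 j)
      have : q σ k * c k ≤ c k := by
        calc q σ k * c k ≤ 1 * c k := mul_le_mul_of_nonneg_right h1 (hc_nonneg k)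
        _ = c k := one_mul _
      have hind : S.indicator c k = c k := Set.indicator_of_mem (show k ∈ S from hk) c
      have : q σ k * c k ≤ S.indicator c k := by rw [hind]; exact this
      have hq := mul_nonneg (hq_nonneg ε (le_of_lt hε) k) (hc_nonneg k)
      show q σ k * c k ≤ q ε k * c k + S.indicator c k
      linarith
  have key := tendsto_tsum_of_dominated_convergence h_sum hab h_bound
  have : (∑' k : ℤ, q 0 k * c k) = c 0 := by
    rw [tsum_eq_single 0 (fun b hb => by rw [hP3 b, if_neg hb, zero_mul]),
      hP3 0, if_pos rfl, one_mul]
  rwa [this] at key
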